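/- arXiv:2109.03175 — 4 statements merged into one kernel-verified Lean document; each statement's English description precedes it below -/
import Mathlib

section
/- The supremum of ‖x − y‖₁ over all pairs x, y in the closed Euclidean ball of radius C in ℝⁿ equals 2C√n. -/
open Finset

lemma sum_abs_le_sqrt_mul (n : ℕ) (z : Fin n → ℝ) :
    ∑ i, |z i| ≤ Real.sqrt n * Real.sqrt (∑ i, (z i) ^ 2) := by
  have h1 : (∑ i, |z i|) ^ 2 ≤ (n : ℝ) * ∑ i, (z i) ^ 2 := by
    have := sq_sum_le_card_mul_sum_sq (s := Finset.univ) (f := fun i => |z i|)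
    simpa [sq_abs] using this
  have h2 : ∑ i, |z i| = Real.sqrt ((∑ i, |z i|) ^ 2) := by
    rw [Real.sqrt_sq (Finset.sum_nonneg fun i _ => abs_nonneg _)]
  rw [h2, ← Real.sqrt_mul (by positivity)]
  exact Real.sqrt_le_sqrt h1

lemma l2_norm_eq (n : ℕ) (x : Fin n → ℝ) :
    ‖(WithLp.equiv 2 (Fin n → ℝ)).symm x‖ = Real.sqrt (∑ i, (x i) ^ 2) := by
  rw [EuclideanSpace.norm_eq]
  congr 1
  exact Finset.sum_congr rfl fun i _ => by simp [sq_abs]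

theorem sup_l1_dist_ball (n : ℕ) (hn : 1 ≤ n) (C : ℝ) (hC : 0 < C) :
    IsLUB {d : ℝ | ∃ x y : Fin n → ℝ,
        Real.sqrt (∑ i, (x i) ^ 2) ≤ C ∧ Real.sqrt (∑ i, (y i) ^ 2) ≤ C ∧
        d = ∑ i, |x i - y i|} (2 * C * Real.sqrt n) := by
  have hn0 : (0 : ℝ) < n := by exact_mod_cast hn
  have hsn : (0 : ℝ) < Real.sqrt n := Real.sqrt_pos.mpr hn0
  constructor
  · rintro d ⟨x, y, hx, hy, rfl⟩
    have hxy : Real.sqrt (∑ i, (x i - y i) ^ 2) ≤ 2 * C := by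
      have := norm_sub_le ((WithLp.equiv 2 (Fin n → ℝ)).symm x)
        ((WithLp.equiv 2 (Fin n → ℝ)).symm y)
      rw [l2_norm_eq, l2_norm_eq] at this
      have hsub : ‖(WithLp.equiv 2 (Fin n → ℝ)).symm x - (WithLp.equiv 2 (Fin n → ℝ)).symm y‖
          = Real.sqrt (∑ i, (x i - y i) ^ 2) := by
        have : (WithLp.equiv 2 (Fin n → ℝ)).symm x - (WithLp.equiv 2 (Fin n → ℝ)).symm y
            = (WithLp.equiv 2 (Fin n → ℝ)).symm (x - y) := rfl
        rw [this, l2_norm_eq]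
        simp
      rw [hsub] at this
      linarith
    calc ∑ i, |x i - y i| ≤ Real.sqrt n * Real.sqrt (∑ i, (x i - y i) ^ 2) :=
          sum_abs_le_sqrt_mul n _
      _ ≤ Real.sqrt n * (2 * C) := by
          exact mul_le_mul_of_nonneg_left hxy (le_of_lt hsn)
      _ = 2 * C * Real.sqrt n := by ring
  · intro b hb
    apply hb
    refine ⟨fun _ => C / Real.sqrt n, fun _ => -(C / Real.sqrt n), ?_, ?_, ?_⟩
    · have : ∑ _i : Fin n, (C / Real.sqrt n) ^ 2 = (n : ℝ) * (C / Real.sqrt n) ^ 2 := by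
        simp [Finset.sum_const, mul_comm]
      rw [this, div_pow, Real.sq_sqrt hn0.le, mul_div_cancel₀ _ (ne_of_gt hn0),
        Real.sqrt_sq hC.le]
    · have : ∑ _i : Fin n, (-(C / Real.sqrt n)) ^ 2 = (n : ℝ) * (C / Real.sqrt n) ^ 2 := by
        simp [Finset.sum_const, mul_comm]
      rw [this, div_pow, Real.sq_sqrt hn0.le, mul_div_cancel₀ _ (ne_of_gt hn0),
        Real.sqrt_sq hC.le]
    · have habs : |C / Real.sqrt n - -(C / Real.sqrt n)| = 2 * (C / Real.sqrt n) := by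
        rw [sub_neg_eq_add, ← two_mul, abs_of_pos (by positivity)]
      simp only [habs, Finset.sum_const, Finset.card_univ, Fintype.card_fin, nsmul_eq_mul]
      field_simp
      exact Real.sq_sqrt hn0.le
end

section
/- The ℓ1-sensitivity of the ℓ2-clipping function f(r) = r · min(1, C/‖r‖₂) on ℝⁿ, defined as sup over pairs x, y of ‖f(x) − f(y)‖₁, equals 2C√n. -/
theorem clip_sensitivity (n : ℕ) (hn : 1 ≤ n) (C : ℝ) (hC : 0 < C)
    (f : (Fin n → ℝ) → (Fin n → ℝ))
    (hf : ∀ r : Fin n → ℝ, f r =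
      if r = 0 then 0
      else fun i => r i * min 1 (C / Real.sqrt (∑ j, (r j) ^ 2))) :
    IsLUB {d : ℝ | ∃ x y : Fin n → ℝ, d = ∑ i, |f x i - f y i|}
      (2 * C * Real.sqrt n) := by
  have hn0 : (0:ℝ) < n := by exact_mod_cast hn
  have hsn : 0 < Real.sqrt n := Real.sqrt_pos.mpr hn0
  have key : ∀ x : Fin n → ℝ, ∑ i, |f x i| ≤ C * Real.sqrt n := by
    intro x
    rw [hf x]
    by_cases h : x = 0
    · simp [h]; positivity
    · simp only [if_neg h]
      have hsum : 0 < ∑ j, x j ^ 2 := by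
        obtain ⟨j, hj⟩ : ∃ j, x j ≠ 0 := by
          by_contra hc; push_neg at hc; exact h (funext hc)
        exact Finset.sum_pos' (fun i _ => sq_nonneg _)
          ⟨j, Finset.mem_univ j, by positivity⟩
      set s := Real.sqrt (∑ j, x j ^ 2) with hs
      have hspos : 0 < s := Real.sqrt_pos.mpr hsum
      set m := min 1 (C / s) with hm
      have hm0 : 0 ≤ m := le_min one_pos.le (by positivity)
      have hsq : m ^ 2 * (∑ j, x j ^ 2) ≤ C ^ 2 := by
        have hms : m * s ≤ C := by
          calc m * s ≤ (C / s) * s := by gcongr; exact min_le_right _ _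
          _ = C := div_mul_cancel₀ _ hspos.ne'
        have h2 : (m * s) ^ 2 ≤ C ^ 2 := by
          apply pow_le_pow_left₀ (by positivity) hms
        have hs2 : s ^ 2 = ∑ j, x j ^ 2 := Real.sq_sqrt hsum.le
        nlinarith
      -- Cauchy-Schwarz
      have cs2 : (∑ i, |x i * m|) ^ 2 ≤ (n : ℝ) * ∑ i, (x i * m) ^ 2 := by
        have := Finset.sum_mul_sq_le_sq_mul_sq Finset.univ
          (fun _ : Fin n => (1:ℝ)) (fun i => |x i * m|)
        simpa [sq_abs, Finset.card_univ, mul_pow] using this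
      have hsum2 : ∑ i, (x i * m) ^ 2 = m ^ 2 * ∑ j, x j ^ 2 := by
        rw [Finset.mul_sum]; exact Finset.sum_congr rfl fun i _ => by ring
      have hb : (∑ i, |x i * m|) ^ 2 ≤ (C * Real.sqrt n) ^ 2 := by
        have hn2 : (Real.sqrt n) ^ 2 = n := Real.sq_sqrt hn0.le
        calc (∑ i, |x i * m|) ^ 2 ≤ (n : ℝ) * ∑ i, (x i * m) ^ 2 := cs2
        _ = (n : ℝ) * (m ^ 2 * ∑ j, x j ^ 2) := by rw [hsum2]
        _ ≤ (n : ℝ) * C ^ 2 := by gcongr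
        _ = (C * Real.sqrt n) ^ 2 := by rw [mul_pow, hn2]; ring
      have h0 : 0 ≤ ∑ i, |x i * m| := Finset.sum_nonneg fun i _ => abs_nonneg _
      nlinarith [mul_pos hC hsn]
  constructor
  · rintro d ⟨x, y, rfl⟩
    calc ∑ i, |f x i - f y i| ≤ ∑ i, (|f x i| + |f y i|) :=
          Finset.sum_le_sum fun i _ => abs_sub _ _
    _ = (∑ i, |f x i|) + ∑ i, |f y i| := Finset.sum_add_distrib
    _ ≤ C * Real.sqrt n + C * Real.sqrt n := add_le_add (key x) (key y)
    _ = 2 * C * Real.sqrt n := by ring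
  · intro b hb
    apply hb
    set c := C / Real.sqrt n with hc
    have hcpos : 0 < c := by positivity
    have hx : (fun _ : Fin n => c) ≠ 0 := by
      intro h; have := congrFun h ⟨0, hn⟩; simp at this; exact hcpos.ne' this
    have hsum : ∑ _j : Fin n, c ^ 2 = C ^ 2 := by
      rw [Finset.sum_const, Finset.card_univ, Fintype.card_fin, nsmul_eq_mul, hc,
        div_pow, Real.sq_sqrt hn0.le]
      field_simp
    have hfx : f (fun _ => c) = fun _ => c := by
      rw [hf]
      rw [if_neg hx]
      funext i
      rw [hsum, Real.sqrt_sq hC.le, div_self hC.ne', min_self, mul_one]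
    have hy : (fun _ : Fin n => -c) ≠ 0 := by
      intro h; have := congrFun h ⟨0, hn⟩; simp at this; exact hcpos.ne' this
    have hfy : f (fun _ => -c) = fun _ => -c := by
      rw [hf]
      rw [if_neg hy]
      funext i
      have : ∑ j : Fin n, (-c) ^ 2 = C ^ 2 := by rw [← hsum]; ring_nf
      rw [this, Real.sqrt_sq hC.le, div_self hC.ne', min_self, mul_one]
    refine ⟨fun _ => c, fun _ => -c, ?_⟩
    rw [hfx, hfy]
    have habs : |c - -c| = 2 * c := by
      rw [sub_neg_eq_add, abs_of_pos (by linarith)]; ring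
    have hkey : (n : ℝ) * (2 * (C / Real.sqrt n)) = 2 * C * Real.sqrt n := by
      field_simp
      nlinarith [Real.mul_self_sqrt hn0.le]
    calc 2 * C * Real.sqrt n = (n : ℝ) * (2 * c) := by rw [hc]; exact hkey.symm
    _ = ∑ _i : Fin n, (2 * c) := by
        rw [Finset.sum_const, Finset.card_univ, Fintype.card_fin, nsmul_eq_mul]
    _ = ∑ i : Fin n, |c - -c| := Finset.sum_congr rfl fun i _ => habs.symm
end

section
/- The ℓ2-clipping function f(r) = r · min(1, C/‖r‖₂) is a fixed point of both x = (−2C/3, −2C/3) and y = (2C/3, 2C/3) in ℝ², and exp((ε/(2C)) · ‖f(x) − f(y)‖₁) = exp(4ε/3) > exp(ε) for every ε > 0. -/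
lemma min_one_aux (C : ℝ) (hC : 0 < C) :
    min 1 (C / Real.sqrt (8 * C ^ 2 / 9)) = 1 := by
  have h8 : Real.sqrt (8 * C ^ 2 / 9) = C * Real.sqrt 8 / 3 := by
    rw [show (8 : ℝ) * C ^ 2 / 9 = (C / 3) ^ 2 * 8 by ring,
      Real.sqrt_mul (sq_nonneg _), Real.sqrt_sq (by positivity)]
    ring
  rw [h8, min_eq_left]
  rw [le_div_iff₀ (by positivity : (0:ℝ) < C * Real.sqrt 8 / 3)]
  nlinarith [Real.sq_sqrt (by norm_num : (8:ℝ) ≥ 0), Real.sqrt_nonneg 8]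

theorem dp_bound_violation (C ε : ℝ) (hC : 0 < C) (hε : 0 < ε)
    (f : (Fin 2 → ℝ) → (Fin 2 → ℝ))
    (hf : ∀ r : Fin 2 → ℝ, f r =
      if r = 0 then 0
      else fun i => r i * min 1 (C / Real.sqrt (∑ j, (r j) ^ 2)))
    (x y : Fin 2 → ℝ)
    (hx : x = fun _ => -(2 * C / 3)) (hy : y = fun _ => 2 * C / 3) :
    f x = x ∧ f y = y ∧
    Real.exp (ε / (2 * C) * ∑ i, |f x i - f y i|) = Real.exp (4 * ε / 3) ∧
    Real.exp (4 * ε / 3) > Real.exp ε := by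
  have hxne : x ≠ 0 := by
    intro h
    have := congrFun h 0
    rw [hx] at this
    simp at this
    linarith
  have hyne : y ≠ 0 := by
    intro h
    have := congrFun h 0
    rw [hy] at this
    simp at this
    linarith
  have hsx : (∑ j, (x j) ^ 2) = 8 * C ^ 2 / 9 := by
    rw [hx]; simp [Fin.sum_univ_two]; ring
  have hsy : (∑ j, (y j) ^ 2) = 8 * C ^ 2 / 9 := by
    rw [hy]; simp [Fin.sum_univ_two]; ring
  have hfx : f x = x := by
    rw [hf x, if_neg hxne]
    funext i
    rw [hsx, min_one_aux C hC, mul_one]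
  have hfy : f y = y := by
    rw [hf y, if_neg hyne]
    funext i
    rw [hsy, min_one_aux C hC, mul_one]
  refine ⟨hfx, hfy, ?_, ?_⟩
  · congr 1
    rw [hfx, hfy, hx, hy, Fin.sum_univ_two]
    have : |(-(2 * C / 3) : ℝ) - 2 * C / 3| = 4 * C / 3 := by
      rw [abs_of_nonpos (by linarith)]; ring
    rw [this]
    field_simp
    ring
  · exact Real.exp_lt_exp.2 (by linarith)
end

section
/- If the Laplace mechanism on the range of the ℓ2-clipping function uses scale b = 2C/ε, then the ε-DP inequality fails: there exist points x, y in the Euclidean ball of radius C in ℝ² and a point z ∈ ℝ² such that the density ratio p_x(z)/p_y(z) > exp(ε). -/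
theorem adept_dp_fails (C ε : ℝ) (hC : 0 < C) (hε : 0 < ε) :
    ∃ x y z : Fin 2 → ℝ,
      Real.sqrt (∑ i, (x i) ^ 2) ≤ C ∧ Real.sqrt (∑ i, (y i) ^ 2) ≤ C ∧
      (∏ i, ε / (4 * C) * Real.exp (-(ε * |x i - z i|) / (2 * C))) /
        (∏ i, ε / (4 * C) * Real.exp (-(ε * |y i - z i|) / (2 * C))) >
      Real.exp ε := by
  refine ⟨fun _ => -(2*C/3), fun _ => 2*C/3, fun _ => -(2*C/3), ?_, ?_, ?_⟩
  · rw [Fin.sum_univ_two]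
    calc Real.sqrt ((-(2*C/3))^2 + (-(2*C/3))^2) ≤ Real.sqrt (C^2) := by
          apply Real.sqrt_le_sqrt; nlinarith
      _ = C := Real.sqrt_sq hC.le
  · rw [Fin.sum_univ_two]
    calc Real.sqrt ((2*C/3)^2 + (2*C/3)^2) ≤ Real.sqrt (C^2) := by
          apply Real.sqrt_le_sqrt; nlinarith
      _ = C := Real.sqrt_sq hC.le
  · rw [Fin.prod_univ_two, Fin.prod_univ_two]
    have h1 : |(-(2*C/3)) - (-(2*C/3))| = 0 := by simp
    have h2 : |2*C/3 - (-(2*C/3))| = 4*C/3 := by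
      rw [abs_of_nonneg (by linarith)]; ring
    rw [h1, h2]
    have hc4 : ε / (4*C) > 0 := by positivity
    have hA : -(ε * 0) / (2*C) = 0 := by ring_nf
    have hB : -(ε * (4*C/3)) / (2*C) = -(2*ε/3) := by
      field_simp; ring
    rw [hA, hB, Real.exp_zero]
    have he : Real.exp (-(2*ε/3)) > 0 := Real.exp_pos _
    have key : (ε / (4*C) * 1 * (ε / (4*C) * 1)) /
        (ε / (4*C) * Real.exp (-(2*ε/3)) * (ε / (4*C) * Real.exp (-(2*ε/3))))
        = Real.exp (4*ε/3) := by
      rw [div_eq_iff (by positivity)]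
      have : Real.exp (4*ε/3) * (Real.exp (-(2*ε/3)) * Real.exp (-(2*ε/3))) = 1 := by
        rw [← Real.exp_add, ← Real.exp_add, ← Real.exp_zero]
        ring_nf
      nlinarith [this]
    rw [key]
    apply Real.exp_lt_exp.mpr
    linarith
end
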